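/- Under assumptions (I)–(III), the sd×sd matrix B := (I_d ⊗ a₀²²)·H⁻¹ is symmetric positive definite, and consequently the (m+sd)×(m+sd) block-diagonal matrix A₀ := diag{a₀, B} is symmetric positive definite. -/

import Mathlib

open Matrix

private lemma auxPosDefOfDet {n : Type*} [Fintype n] [DecidableEq n]
    {G : Matrix n n ℝ} (h : G.PosSemidef) (hdet : IsUnit G.det) : G.PosDef := by
  refine PosDef.of_dotProduct_mulVec_pos h.1 (fun x hx => ?_)
  rcases lt_or_eq_of_le (h.dotProduct_mulVec_nonneg x) with hlt | heq
  · exact hlt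
  · exfalso
    have h0 : G.mulVec x = 0 := (h.dotProduct_mulVec_zero_iff x).mp heq.symm
    apply hx
    have := congrArg (fun v => G⁻¹ *ᵥ v) h0
    simpa [Matrix.mulVec_mulVec, Matrix.nonsing_inv_mul G hdet] using this

private lemma auxConj {n : Type*} [Fintype n] [DecidableEq n]
    {G K : Matrix n n ℝ} (hG : G.PosDef) (hK : IsUnit K.det) :
    (Kᴴ * G * K).PosDef := by
  refine PosDef.of_dotProduct_mulVec_pos (isHermitian_conjTranspose_mul_mul K hG.1) (fun x hx => ?_)
  have hKx : K *ᵥ x ≠ 0 := by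
    intro h
    apply hx
    have := congrArg (fun v => K⁻¹ *ᵥ v) h
    simpa [Matrix.mulVec_mulVec, Matrix.nonsing_inv_mul K hK] using this
  have hpos := hG.dotProduct_mulVec_pos hKx
  calc (0:ℝ) < star (K *ᵥ x) ⬝ᵥ G *ᵥ (K *ᵥ x) := hpos
    _ = star x ⬝ᵥ (Kᴴ * G * K) *ᵥ x := by
        rw [star_mulVec, Matrix.mul_assoc, ← Matrix.mulVec_mulVec,
          dotProduct_mulVec (star x), Matrix.mulVec_mulVec]

private lemma auxBlockDiag {n m : Type*} [Fintype n] [Fintype m]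
    [DecidableEq n] [DecidableEq m]
    {A : Matrix n n ℝ} {B : Matrix m m ℝ} (hA : A.PosDef) (hB : B.PosDef) :
    (fromBlocks A 0 0 B).PosDef := by
  refine PosDef.of_dotProduct_mulVec_pos ?_ (fun x hx => ?_)
  · rw [IsHermitian, fromBlocks_conjTranspose, hA.1.eq, hB.1.eq]
    simp
  · have hx' : x = Sum.elim (x ∘ Sum.inl) (x ∘ Sum.inr) := by
      ext (i | i) <;> rfl
    rw [hx', fromBlocks_mulVec, Function.star_sumElim, sumElim_dotProduct_sumElim]
    simp only [Matrix.zero_mulVec, add_zero, zero_add]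
    by_cases h1 : x ∘ Sum.inl = 0
    · have h2 : x ∘ Sum.inr ≠ 0 := by
        intro h2
        apply hx
        ext (i | i)
        · exact congrFun h1 i
        · exact congrFun h2 i
      exact add_pos_of_nonneg_of_pos (hA.posSemidef.dotProduct_mulVec_nonneg _) (hB.dotProduct_mulVec_pos h2)
    · exact add_pos_of_pos_of_nonneg (hA.dotProduct_mulVec_pos h1) (hB.posSemidef.dotProduct_mulVec_nonneg _)

/-- Theorem 4.1(a): under assumptions (I)–(III), `B = (I_d ⊗ a₀²²) * H⁻¹` is symmetric
positive definite, and hence `A₀ = diag{a₀, B}` is symmetric positive definite.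
Here `m = p + s` with `p = m - s ≥ 1`, and the `m`-dimensional index is `Fin p ⊕ Fin s`. -/
theorem stmt_0 (p s d : ℕ) (hp : 1 ≤ p) (hs : 1 ≤ s) (hd : 1 ≤ d)
    (a : Fin d → Matrix (Fin p ⊕ Fin s) (Fin p ⊕ Fin s) ℝ)
    (a11 : Matrix (Fin p) (Fin p) ℝ) (a12 : Matrix (Fin p) (Fin s) ℝ)
    (a21 : Matrix (Fin s) (Fin p) ℝ) (a22 : Matrix (Fin s) (Fin s) ℝ)
    (D21 : Fin d → Fin d → Matrix (Fin s) (Fin p) ℝ)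
    (D22 : Fin d → Fin d → Matrix (Fin s) (Fin s) ℝ)
    (a₀ : Matrix (Fin p ⊕ Fin s) (Fin p ⊕ Fin s) ℝ)
    (ha₀ : a₀ = fromBlocks a11 a12 a21 a22)
    (D : Fin d → Fin d → Matrix (Fin p ⊕ Fin s) (Fin p ⊕ Fin s) ℝ)
    (hD : ∀ j k, D j k = fromBlocks 0 0 (D21 j k) (D22 j k))
    (hpd : a₀.PosDef)
    -- (I): a₀ ⬝ a_j is symmetric
    (hI : ∀ j, (a₀ * a j).IsSymm)
    -- (II): the md × md block matrix with (j,k) block a₀ ⬝ D_{jk} is symmetric PSD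
    (hII : (Matrix.of fun (x y : Fin d × (Fin p ⊕ Fin s)) =>
      (a₀ * D x.1 y.1) x.2 y.2).PosSemidef)
    -- (III): the sd × sd block matrix H with (j,k) block D_{jk}²² is invertible
    (H : Matrix (Fin d × Fin s) (Fin d × Fin s) ℝ)
    (hH : H = Matrix.of fun (x y : Fin d × Fin s) => D22 x.1 y.1 x.2 y.2)
    (hIII : IsUnit H.det)
    (B : Matrix (Fin d × Fin s) (Fin d × Fin s) ℝ)
    (hB : B = (kroneckerMap (· * ·) (1 : Matrix (Fin d) (Fin d) ℝ) a22) * H⁻¹) :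
    B.PosDef ∧ (fromBlocks a₀ 0 0 B).PosDef := by
  -- a22 is positive definite
  have ha22 : a22.PosDef := by
    refine PosDef.of_dotProduct_mulVec_pos ?_ (fun x hx => ?_)
    · ext i j
      have := hpd.1.apply (Sum.inr j) (Sum.inr i)
      simpa [ha₀] using this.symm
    · have hy : (Sum.elim (0 : Fin p → ℝ) x) ≠ 0 := by
        intro h
        exact hx (funext fun i => congrFun h (Sum.inr i))
      have := hpd.dotProduct_mulVec_pos hy
      rw [ha₀, fromBlocks_mulVec, Function.star_sumElim,
        sumElim_dotProduct_sumElim] at this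
      simpa using this
  set K : Matrix (Fin d × Fin s) (Fin d × Fin s) ℝ :=
    kroneckerMap (· * ·) (1 : Matrix (Fin d) (Fin d) ℝ) a22 with hK
  -- K is symmetric
  have ha22symm : ∀ i j, a22 j i = a22 i j := by
    intro i j
    have := ha22.1.apply j i
    simpa using this.symm
  have hKsymm : Kᴴ = K := by
    ext ⟨j, i⟩ ⟨k, l⟩
    simp only [conjTranspose_apply, hK, kroneckerMap_apply, star_trivial]
    rw [Matrix.one_apply, Matrix.one_apply, ha22symm]
    simp [eq_comm]
  -- K is invertible
  have hKdet : IsUnit K.det := by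
    rw [hK, Matrix.det_kronecker]
    simp only [det_one, one_pow, one_mul]
    exact isUnit_iff_ne_zero.mpr (pow_ne_zero _ ha22.det_pos.ne')
  -- G : principal submatrix of the big PSD matrix
  set G : Matrix (Fin d × Fin s) (Fin d × Fin s) ℝ :=
    (Matrix.of fun (x y : Fin d × (Fin p ⊕ Fin s)) =>
      (a₀ * D x.1 y.1) x.2 y.2).submatrix
      (fun q : Fin d × Fin s => (q.1, Sum.inr q.2))
      (fun q : Fin d × Fin s => (q.1, Sum.inr q.2)) with hG
  have hGpsd : G.PosSemidef := hII.submatrix _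
  -- G = K * H
  have hGKH : G = K * H := by
    ext ⟨j, i⟩ ⟨k, l⟩
    have hlhs : G (j, i) (k, l) = (a22 * D22 j k) i l := by
      simp only [hG, submatrix_apply, of_apply, ha₀, hD, fromBlocks_multiply]
      simp [fromBlocks_apply₂₂]
    rw [hlhs, Matrix.mul_apply, Matrix.mul_apply]
    rw [Fintype.sum_prod_type]
    simp only [hK, hH, kroneckerMap_apply, of_apply, Matrix.one_apply]
    rw [Finset.sum_eq_single j]
    · simp
    · intro b _ hb
      simp [Ne.symm hb]
    · intro hj; exact absurd (Finset.mem_univ j) hj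
  -- G is positive definite
  have hGdet : IsUnit G.det := by
    rw [hGKH, Matrix.det_mul]
    exact hKdet.mul hIII
  have hGpd : G.PosDef := auxPosDefOfDet hGpsd hGdet
  -- H⁻¹ = G⁻¹ * K
  have hHinv : H⁻¹ = G⁻¹ * K := by
    have hHKG : H = K⁻¹ * G := by
      rw [hGKH, ← Matrix.mul_assoc, Matrix.nonsing_inv_mul K hKdet, Matrix.one_mul]
    rw [hHKG, Matrix.mul_inv_rev, Matrix.nonsing_inv_nonsing_inv K hKdet]
  -- B = Kᴴ * G⁻¹ * K
  have hBconj : B = Kᴴ * G⁻¹ * K := by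
    rw [hB, hHinv, hKsymm, ← Matrix.mul_assoc]
  have hBpd : B.PosDef := hBconj ▸ auxConj hGpd.inv hKdet
  exact ⟨hBpd, auxBlockDiag hpd hBpd⟩
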